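/- Suppose Y takes only finitely many values y_1, …, y_N, each with positive probability, and that for each i, N_{y_i} is a Stein operator for ν_{y_i} on C (i.e. for every probability measure ρ on ℝ: ρ = ν_{y_i} if and only if ∫ N_{y_i} f dρ = 0 for all f ∈ C), and that for every f ∈ C̃ the map (x,y) ↦ N_y f(x,y) is essentially bounded with respect to ℙ_{M,Y} and jointly measurable. If the joint law ℙ_{X,Y} of (X,Y) equals the joint law ℙ_{M,Y} of (M,Y), then for every f ∈ C̃ one has 𝔼[N_Y f(X,Y) | σ(Y)] = 0 almost surely, and in particular 𝔼[N_Y f(X,Y)] = 0. -/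

import Mathlib

open MeasureTheory ProbabilityTheory

/-- Suppose `Y` takes only finitely many values, each with positive
probability, each `N y` (for `y` a value of `Y`) is a Stein operator for `ν y` on `C`,
and for every `f ∈ C̃` the map `(x, y) ↦ N y f(·,y) x` is `ℙ_{M,Y}`-essentially bounded
and jointly measurable. Then `ℙ_{X,Y} = ℙ_{M,Y}` implies that for every `f ∈ C̃`,
`𝔼[N_Y f(X,Y) | σ(Y)] = 0` a.s., and in particular `𝔼[N_Y f(X,Y)] = 0`. -/
theorem stein_dependence_necessary_finite_range
    {Ω : Type*} [MeasurableSpace Ω] (P : Measure Ω) [IsProbabilityMeasure P]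
    (M Y X : Ω → ℝ) (hM : Measurable M) (hY : Measurable Y) (hX : Measurable X)
    (ν : Kernel ℝ ℝ) [IsMarkovKernel ν]
    (hcond : ∀ A B : Set ℝ, MeasurableSet A → MeasurableSet B →
      Measure.map (fun ω => (M ω, Y ω)) P (A ×ˢ B)
        = ∫⁻ y in B, ν y A ∂(Measure.map Y P))
    (C : Set (ℝ → ℝ)) (N : ℝ → (ℝ → ℝ) → ℝ → ℝ)
    (s : Finset ℝ) (hrange : ∀ ω, Y ω ∈ (s : Set ℝ))
    (hpos : ∀ y ∈ s, 0 < P (Y ⁻¹' {y}))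
    (hStein : ∀ y ∈ s, ∀ ρ : Measure ℝ, IsProbabilityMeasure ρ →
      (ρ = ν y ↔ ∀ f ∈ C, ∫ x, N y f x ∂ρ = 0))
    (hmeas : ∀ f : ℝ × ℝ → ℝ, (∀ y : ℝ, (fun x => f (x, y)) ∈ C) →
      Measurable (fun p : ℝ × ℝ => N p.2 (fun x => f (x, p.2)) p.1))
    (hbdd : ∀ f : ℝ × ℝ → ℝ, (∀ y : ℝ, (fun x => f (x, y)) ∈ C) →
      ∃ B : ℝ, ∀ᵐ p ∂(Measure.map (fun ω => (M ω, Y ω)) P),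
        |N p.2 (fun x => f (x, p.2)) p.1| ≤ B)
    (hlaw : Measure.map (fun ω => (X ω, Y ω)) P = Measure.map (fun ω => (M ω, Y ω)) P) :
    ∀ f : ℝ × ℝ → ℝ, (∀ y : ℝ, (fun x => f (x, y)) ∈ C) →
      (P[(fun ω => N (Y ω) (fun x => f (x, Y ω)) (X ω)) |
          MeasurableSpace.comap Y inferInstance] =ᵐ[P] 0)
      ∧ ∫ ω, N (Y ω) (fun x => f (x, Y ω)) (X ω) ∂P = 0 := by
  classical
  have hMY : Measurable (fun ω => (M ω, Y ω)) := hM.prodMk hY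
  have hXY : Measurable (fun ω => (X ω, Y ω)) := hX.prodMk hY
  set μY : Measure ℝ := Measure.map Y P with hμYdef
  set m : Measure (ℝ × ℝ) := Measure.map (fun ω => (M ω, Y ω)) P with hmdef
  haveI : IsProbabilityMeasure m := Measure.isProbabilityMeasure_map hMY.aemeasurable
  haveI : IsProbabilityMeasure μY := Measure.isProbabilityMeasure_map hY.aemeasurable
  set c : ℝ → ENNReal := fun y => P (Y ⁻¹' {y}) with hcdef
  -- decomposition of μY
  have hμY : μY = ∑ y ∈ s, c y • Measure.dirac y := by
    ext B hB
    rw [Measure.map_apply hY hB]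
    have hpre : Y ⁻¹' B = ⋃ y ∈ (s.filter (· ∈ B)), Y ⁻¹' {y} := by
      ext ω
      simp only [Set.mem_preimage, Set.mem_iUnion, Finset.mem_filter, Set.mem_singleton_iff]
      constructor
      · intro h; exact ⟨Y ω, ⟨hrange ω, h⟩, rfl⟩
      · rintro ⟨y, ⟨_, hyB⟩, hYy⟩; rw [hYy]; exact hyB
    rw [hpre, measure_biUnion_finset ?_ (fun y _ => hY (measurableSet_singleton y))]
    · rw [Measure.finset_sum_apply]
      rw [Finset.sum_filter]
      refine Finset.sum_congr rfl fun y _ => ?_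
      rw [Measure.smul_apply, Measure.dirac_apply' _ hB]
      by_cases hyB : y ∈ B <;> simp [hyB, hcdef]
    · intro y _ z _ hyz
      refine Set.disjoint_left.2 fun ω h1 h2 => ?_
      exact hyz (h1.symm.trans h2)
  -- decomposition of m
  have hm_eq : m = ∑ y ∈ s, c y • Measure.map (fun x => (x, y)) (ν y) := by
    refine ext_of_generate_finite _ generateFrom_prod.symm isPiSystem_prod
      (fun t ht => ?_) ?_
    · obtain ⟨A, hA, B, hB, rfl⟩ := ht
      simp only [Set.mem_setOf_eq] at hA hB
      rw [hmdef, hcond A B hA hB, ← lintegral_indicator hB, hμY,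
        lintegral_finset_sum_measure, Measure.finset_sum_apply]
      refine Finset.sum_congr rfl fun y _ => ?_
      rw [lintegral_smul_measure, Measure.smul_apply,
        lintegral_dirac' _ (((Kernel.measurable_coe ν hA)).indicator hB),
        Measure.map_apply measurable_prodMk_right (hA.prod hB)]
      have : (fun x => (x, y)) ⁻¹' (A ×ˢ B) = if y ∈ B then A else ∅ := by
        ext x; by_cases hyB : y ∈ B <;> simp [hyB]
      rw [this]
      by_cases hyB : y ∈ B <;> simp [hyB]
    · have h1 : m Set.univ = 1 := measure_univ
      have h2 : μY Set.univ = 1 := by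
        rw [hμYdef]; exact measure_univ
      rw [h1, ← Set.univ_prod_univ] at *
      rw [Measure.finset_sum_apply]
      have : ∀ y ∈ s, (c y • Measure.map (fun x => (x, y)) (ν y)) (Set.univ ×ˢ Set.univ)
          = c y := by
        intro y _
        rw [Measure.smul_apply, Set.univ_prod_univ,
          Measure.map_apply measurable_prodMk_right MeasurableSet.univ]
        simp
      rw [Finset.sum_congr rfl this]
      have := h2
      rw [hμY, Measure.finset_sum_apply] at this
      simp only [Measure.smul_apply, Measure.dirac_apply' _ MeasurableSet.univ,
        Set.indicator_univ, Pi.one_apply, smul_eq_mul, mul_one] at this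
      rw [← this]
  intro f hf
  set g : ℝ × ℝ → ℝ := fun p => N p.2 (fun x => f (x, p.2)) p.1 with hgdef
  have hg : Measurable g := hmeas f hf
  obtain ⟨B, hB⟩ := hbdd f hf
  have hB' : ∀ᵐ p ∂m, ‖g p‖ ≤ B := hB.mono fun p hp => by rwa [Real.norm_eq_abs]
  have hgint : Integrable g m :=
    Integrable.mono' (integrable_const B) hg.aestronglyMeasurable hB'
  -- Stein identity
  have hν0 : ∀ y ∈ s, ∫ x, g (x, y) ∂(ν y) = 0 := by
    intro y hy
    exact ((hStein y hy (ν y) inferInstance).mp rfl) _ (hf y)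
  -- key set-integral computation
  have key : ∀ A : Set ℝ, MeasurableSet A → ∫ p in Set.univ ×ˢ A, g p ∂m = 0 := by
    intro A hA
    have hTmeas : MeasurableSet (Set.univ ×ˢ A : Set (ℝ × ℝ)) := MeasurableSet.univ.prod hA
    set g' : ℝ × ℝ → ℝ := (Set.univ ×ˢ A).indicator g with hg'def
    have hg'meas : Measurable g' := hg.indicator hTmeas
    have hg'int : Integrable g' m := hgint.indicator hTmeas
    have hle : ∀ y ∈ s, c y • Measure.map (fun x => (x, y)) (ν y) ≤ m := by
      intro y hy
      rw [hm_eq, Measure.le_iff']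
      intro t
      rw [Measure.coe_finset_sum, Finset.sum_apply]
      exact Finset.single_le_sum
        (f := fun y => (c y • Measure.map (fun x => (x, y)) (ν y)) t)
        (fun i _ => zero_le) hy
    rw [← integral_indicator hTmeas, ← hg'def, hm_eq,
      integral_finset_sum_measure (fun y hy => hg'int.mono_measure (hle y hy))]
    refine Finset.sum_eq_zero fun y hy => ?_
    rw [integral_smul_measure,
      integral_map measurable_prodMk_right.aemeasurable hg'meas.aestronglyMeasurable]
    have : ∀ x, g' (x, y) = if y ∈ A then g (x, y) else 0 := by
      intro x
      by_cases hyA : y ∈ A <;> simp [hg'def, Set.indicator, hyA]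
    simp_rw [this]
    by_cases hyA : y ∈ A
    · simp only [hyA, if_true]
      rw [hν0 y hy, smul_zero]
    · simp [hyA]
  -- pull back to Ω
  have hGint : Integrable (fun ω => g (X ω, Y ω)) P := by
    have := (integrable_map_measure hg.aestronglyMeasurable hXY.aemeasurable).mp
      (hlaw ▸ hgint)
    exact this
  have hset : ∀ A : Set ℝ, MeasurableSet A → ∫ ω in Y ⁻¹' A, g (X ω, Y ω) ∂P = 0 := by
    intro A hA
    have hpre : Y ⁻¹' A = (fun ω => (X ω, Y ω)) ⁻¹' (Set.univ ×ˢ A) := by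
      ext ω; simp
    rw [hpre, ← setIntegral_map (MeasurableSet.univ.prod hA) hg.aestronglyMeasurable
      hXY.aemeasurable, hlaw]
    exact key A hA
  have hmle : MeasurableSpace.comap Y inferInstance ≤ ‹MeasurableSpace Ω› := hY.comap_le
  haveI : SigmaFinite (P.trim hmle) := by
    haveI := isFiniteMeasure_trim (μ := P) hmle
    infer_instance
  have h0 : (0 : Ω → ℝ) =ᵐ[P]
      P[(fun ω => g (X ω, Y ω)) | MeasurableSpace.comap Y inferInstance] := by
    refine ae_eq_condExp_of_forall_setIntegral_eq hmle hGint
      (fun t _ _ => integrableOn_zero) (fun t ht _ => ?_)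
      (stronglyMeasurable_const.aestronglyMeasurable)
    obtain ⟨A, hA, rfl⟩ := ht
    rw [hset A hA]
    simp
  constructor
  · exact h0.symm
  · have := hset Set.univ MeasurableSet.univ
    rwa [Set.preimage_univ, setIntegral_univ] at this
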